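/- arXiv:1012.0489 — 2 statements merged into one kernel-verified Lean document; each statement's English description precedes it below -/
import Mathlib

section
/- Let (W,S) be a Coxeter system with distinct simple reflections s, t₁, t₂ such that m(s,t₁) = m(s,t₂) = ∞ and m(t₁,t₂) is finite. Then the subgroup of W generated by t₁t₂s and t₁st₂ is a free group of rank 2; in particular W contains a non-abelian free subgroup. -/
open Real
section
variable {B : Type*} (M : CoxeterMatrix B)

noncomputable def kf (x y : B) : ℝ :=
  if M x y = 0 then -1 else -Real.cos (Real.pi / (M x y))

lemma kf_symm (x y : B) : kf M x y = kf M y x := by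
  unfold kf; rw [M.symmetric x y]

lemma kf_diag (x : B) : kf M x x = 1 := by
  unfold kf; rw [M.diagonal x]; norm_num

lemma kf_of_eq_zero {x y : B} (h : M x y = 0) : kf M x y = -1 := by
  unfold kf; rw [h]; simp

lemma kf_of_ne_zero {x y : B} (h : M x y ≠ 0) :
    kf M x y = -Real.cos (Real.pi / (M x y)) := by
  unfold kf; rw [if_neg h]

noncomputable def la (x : B) : (B →₀ ℝ) →ₗ[ℝ] ℝ :=
  Finsupp.linearCombination ℝ (fun z => kf M z x)

noncomputable def rf (x : B) : Module.End ℝ (B →₀ ℝ) :=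
  LinearMap.id - ((2:ℝ) • (la M x)).smulRight (Finsupp.single x 1)

lemma rf_apply (x : B) (v : B →₀ ℝ) :
    rf M x v = v - (2 * la M x v) • Finsupp.single x 1 := by
  simp [rf, mul_smul]

lemma la_single (x z : B) : la M x (Finsupp.single z 1) = kf M z x := by
  simp [la, Finsupp.linearCombination_single]

lemma la_rf (x y : B) (v : B →₀ ℝ) :
    la M y (rf M x v) = la M y v - 2 * la M x v * kf M x y := by
  rw [rf_apply, map_sub, map_smul, la_single, smul_eq_mul]

lemma rf_invol (x : B) (v : B →₀ ℝ) : rf M x (rf M x v) = v := by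
  have h := la_rf M x x v
  rw [kf_diag] at h
  rw [rf_apply (v := rf M x v), h, rf_apply]
  have : (2 * ((la M x) v - 2 * (la M x) v * 1)) = -(2 * la M x v) := by ring
  rw [this]
  module
end

lemma trigA1 (θ φ : ℝ) :
    Real.sin (θ + 3*φ) = (4*(Real.cos φ)^2 - 1)*Real.sin (θ+φ) - 2*Real.cos φ*Real.sin θ := by
  have h := Real.sin_sq_add_cos_sq φ
  rw [Real.sin_add, Real.sin_add, Real.sin_three_mul, Real.cos_three_mul]
  linear_combination (-4*Real.cos θ*Real.sin φ) * h

lemma trigA2 (θ φ : ℝ) :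
    Real.sin (θ + 2*φ) = 2*Real.cos φ*Real.sin (θ+φ) - Real.sin θ := by
  have h := Real.sin_sq_add_cos_sq φ
  rw [Real.sin_add, Real.sin_add, Real.sin_two_mul, Real.cos_two_mul]
  ring

lemma trigA2' (θ φ : ℝ) :
    Real.sin (θ + 2*φ) = (4*(Real.cos φ)^2 - 1)*Real.sin θ - 2*Real.cos φ*Real.sin (θ - φ) := by
  have h := Real.sin_sq_add_cos_sq φ
  rw [Real.sin_add, Real.sin_sub, Real.sin_two_mul, Real.cos_two_mul]
  ring

lemma trigA3 (θ φ : ℝ) :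
    2*Real.cos φ*Real.sin θ = Real.sin (θ+φ) + Real.sin (θ - φ) := by
  rw [Real.sin_add, Real.sin_sub]; ring

lemma trigA3' (θ φ : ℝ) :
    Real.sin (θ+φ) = 2*Real.cos φ*Real.sin θ - Real.sin (θ - φ) := by
  rw [Real.sin_add, Real.sin_sub]; ring

section
variable {B : Type*} (M : CoxeterMatrix B)

lemma pair_pow {x y : B} (hxy : x ≠ y) (h0 : M x y ≠ 0) :
    (rf M x * rf M y) ^ (M x y) = 1 := by
  have h1 : M x y ≠ 1 := M.off_diagonal x y hxy
  have hm2 : 2 ≤ M x y := by omega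
  set m : ℕ := M x y with hmdef
  have hmR : (0:ℝ) < (m:ℝ) := by positivity
  set φ : ℝ := Real.pi / m with hφdef
  set c : ℝ := Real.cos φ with hcdef
  set s : ℝ := Real.sin φ with hsdef
  have hφpos : 0 < φ := by positivity
  have hφlt : φ < Real.pi := by
    rw [hφdef]
    apply div_lt_self Real.pi_pos
    exact_mod_cast by omega
  have hs : 0 < s := Real.sin_pos_of_pos_of_lt_pi hφpos hφlt
  have hkxy : kf M x y = -c := by rw [kf_of_ne_zero M h0]
  have hkyx : kf M y x = -c := by rw [← kf_symm, hkxy]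
  set αx : B →₀ ℝ := Finsupp.single x 1 with hαx
  set αy : B →₀ ℝ := Finsupp.single y 1 with hαy
  set P : Module.End ℝ (B →₀ ℝ) := rf M x * rf M y with hP
  have laxx : la M x αx = 1 := by rw [hαx, la_single, kf_diag]
  have layy : la M y αy = 1 := by rw [hαy, la_single, kf_diag]
  have laxy : la M y αx = -c := by rw [hαx, la_single, hkxy]
  have layx : la M x αy = -c := by rw [hαy, la_single, hkyx]
  have hPax : P αx = (4*c^2-1) • αx + (2*c) • αy := by
    have h2 : rf M y αx = αx + (2*c) • αy := by
      rw [rf_apply, laxy]; module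
    rw [hP, Module.End.mul_apply, h2, rf_apply, map_add, map_smul, laxx, layx,
      smul_eq_mul]
    module
  have hPay : P αy = (-(2*c)) • αx + (-1 : ℝ) • αy := by
    have h2 : rf M y αy = (-1:ℝ) • αy := by
      rw [rf_apply, layy]; module
    rw [hP, Module.End.mul_apply, h2, map_smul, rf_apply, layx]
    module
  have key : ∀ k : ℕ,
      s • ((P^k) αx) = Real.sin (2*k*φ + φ) • αx + Real.sin (2*k*φ) • αy ∧
      s • ((P^k) αy) = (-Real.sin (2*k*φ)) • αx + (-Real.sin (2*k*φ - φ)) • αy := by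
    intro k
    induction k with
    | zero =>
      constructor
      · norm_num; rfl
      · norm_num [Real.sin_neg]; rfl
    | succ k ih =>
      obtain ⟨ih1, ih2⟩ := ih
      have happ : ∀ v : B →₀ ℝ, (P^(k+1)) v = P ((P^k) v) := by
        intro v; rw [pow_succ', Module.End.mul_apply]
      have e1 : 2*((k:ℝ)+1)*φ + φ = 2*(k:ℝ)*φ + 3*φ := by ring
      have e2 : 2*((k:ℝ)+1)*φ = 2*(k:ℝ)*φ + 2*φ := by ring
      have e3 : 2*((k:ℝ)+1)*φ - φ = 2*(k:ℝ)*φ + φ := by ring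
      constructor
      · push_cast
        rw [e1, e2, trigA1, trigA2, happ, ← map_smul, ih1, map_add, map_smul,
          map_smul, hPax, hPay]
        module
      · push_cast
        rw [e3, e2, trigA2', trigA3', happ, ← map_smul, ih2, map_add, map_smul,
          map_smul, hPax, hPay]
        module
  have h2mφ : 2*(m:ℝ)*φ = 2*Real.pi := by
    rw [hφdef]
    field_simp
  have hsin1 : Real.sin (2*(m:ℝ)*φ + φ) = s := by
    rw [h2mφ, add_comm, Real.sin_add_two_pi]
  have hsin2 : Real.sin (2*(m:ℝ)*φ) = 0 := by rw [h2mφ, Real.sin_two_pi]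
  have hsin3 : Real.sin (2*(m:ℝ)*φ - φ) = -s := by
    rw [h2mφ, show 2*Real.pi - φ = -φ + 2*Real.pi by ring, Real.sin_add_two_pi,
      Real.sin_neg]
  obtain ⟨k1, k2⟩ := key m
  rw [hsin1, hsin2] at k1
  rw [hsin2, hsin3] at k2
  have hinj := smul_right_injective (M := B →₀ ℝ) (r := s) (ne_of_gt hs)
  have hPmx : (P^m) αx = αx := by
    apply hinj
    show s • (P^m) αx = s • αx
    rw [k1]; module
  have hPmy : (P^m) αy = αy := by
    apply hinj
    show s • (P^m) αy = s • αy
    rw [k2]; module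
  have hcc : 1 - c^2 ≠ 0 := by
    have h := Real.sin_sq_add_cos_sq φ
    intro hcon
    rw [hcdef] at hcon
    nlinarith
  apply LinearMap.ext
  intro v
  set p := la M x v with hp
  set q := la M y v with hq
  set a : ℝ := (p + c*q)/(1-c^2) with ha
  set b : ℝ := (q + c*p)/(1-c^2) with hb
  set w : (B →₀ ℝ) := v - a • αx - b • αy with hw
  have hwx : la M x w = 0 := by
    rw [hw, map_sub, map_sub, map_smul, map_smul, laxx, layx, ← hp,
      smul_eq_mul, smul_eq_mul, ha, hb]
    field_simp
    ring
  have hwy : la M y w = 0 := by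
    rw [hw, map_sub, map_sub, map_smul, map_smul, layy, laxy, ← hq,
      smul_eq_mul, smul_eq_mul, ha, hb]
    field_simp
    ring
  have hPw : P w = w := by
    have h2 : rf M y w = w := by
      rw [rf_apply, hwy]; module
    rw [hP, Module.End.mul_apply, h2, rf_apply, hwx]; module
  have hPkw : ∀ k : ℕ, (P^k) w = w := by
    intro k
    induction k with
    | zero => simp
    | succ k ih => rw [pow_succ, Module.End.mul_apply, hPw, ih]
  have hv : v = a • αx + b • αy + w := by rw [hw]; module
  rw [Module.End.one_apply, hv, map_add, map_add, map_smul, map_smul, hPmx,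
    hPmy, hPkw]
end

section
variable {B : Type*} (M : CoxeterMatrix B)

lemma rf_liftable : M.IsLiftable (rf M) := by
  intro x y
  by_cases hxy : x = y
  · subst hxy
    rw [M.diagonal x, pow_one]
    apply LinearMap.ext
    intro v
    rw [Module.End.mul_apply, rf_invol, Module.End.one_apply]
  · by_cases h0 : M x y = 0
    · rw [h0, pow_zero]
    · exact pair_pow M hxy h0

variable {W : Type*} [Group W] (cs : CoxeterSystem M W)

noncomputable def geomRep : W →* Module.End ℝ (B →₀ ℝ) :=
  cs.lift ⟨rf M, rf_liftable M⟩

lemma geomRep_simple (x : B) : geomRep M cs (cs.simple x) = rf M x :=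
  cs.lift_apply_simple (rf_liftable M) x

end

section PingPong
variable {B : Type*} {M : CoxeterMatrix B} {s t₁ t₂ : B}

/-- the cosine parameter -/
noncomputable def cc (M : CoxeterMatrix B) (t₁ t₂ : B) : ℝ :=
  Real.cos (Real.pi / (M t₁ t₂))

lemma cc_nonneg (ht : t₁ ≠ t₂) (hm : M t₁ t₂ ≠ 0) : 0 ≤ cc M t₁ t₂ := by
  have h1 : M t₁ t₂ ≠ 1 := M.off_diagonal t₁ t₂ ht
  have hm2 : 2 ≤ M t₁ t₂ := by omega
  have hmR : (2:ℝ) ≤ (M t₁ t₂ : ℝ) := by exact_mod_cast hm2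
  apply Real.cos_nonneg_of_mem_Icc
  constructor
  · have h0 : 0 ≤ Real.pi / (M t₁ t₂ : ℝ) := by positivity
    linarith [Real.pi_pos]
  · rw [div_le_div_iff₀ (by linarith) (by norm_num)]
    nlinarith [Real.pi_pos]

-- transition formulas
lemma laf_ss (v : B →₀ ℝ) : la M s (rf M s v) = -(la M s v) := by
  rw [la_rf, kf_diag]; ring
lemma laf_s1 (h₁ : M s t₁ = 0) (v : B →₀ ℝ) :
    la M t₁ (rf M s v) = la M t₁ v + 2 * la M s v := by
  rw [la_rf, kf_of_eq_zero M h₁]; ring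
lemma laf_1s (h₁ : M s t₁ = 0) (v : B →₀ ℝ) :
    la M s (rf M t₁ v) = la M s v + 2 * la M t₁ v := by
  have : M t₁ s = 0 := by rw [← M.symmetric]; exact h₁
  rw [la_rf, kf_of_eq_zero M this]; ring
lemma laf_11 (v : B →₀ ℝ) : la M t₁ (rf M t₁ v) = -(la M t₁ v) := by
  rw [la_rf, kf_diag]; ring
lemma laf_12 (hm : M t₁ t₂ ≠ 0) (v : B →₀ ℝ) :
    la M t₂ (rf M t₁ v) = la M t₂ v + 2 * cc M t₁ t₂ * la M t₁ v := by
  rw [la_rf, kf_of_ne_zero M hm]; unfold cc; ring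
lemma laf_21 (hm : M t₁ t₂ ≠ 0) (v : B →₀ ℝ) :
    la M t₁ (rf M t₂ v) = la M t₁ v + 2 * cc M t₁ t₂ * la M t₂ v := by
  have hm' : M t₂ t₁ ≠ 0 := by rw [← M.symmetric]; exact hm
  rw [la_rf, kf_of_ne_zero M hm']
  have : (M.M t₂ t₁ : ℝ) = (M.M t₁ t₂ : ℝ) := by rw [M.symmetric t₁ t₂]
  rw [this]; unfold cc; ring

-- regions
def Rs (M : CoxeterMatrix B) (s t₁ t₂ : B) (v : B →₀ ℝ) : Prop :=
  la M s v < 0 ∧ 0 < la M t₁ v + la M s v ∧ 0 < la M t₂ v + la M s v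

def RD (M : CoxeterMatrix B) (s t₁ t₂ : B) (v : B →₀ ℝ) : Prop :=
  0 < la M s v ∧ 0 < la M s v + la M t₁ v ∧ 0 < la M s v + la M t₂ v

variable (h₁ : M s t₁ = 0) (h₂ : M s t₂ = 0) (ht : t₁ ≠ t₂) (hm : M t₁ t₂ ≠ 0)
include h₁ h₂ ht hm

lemma sstep {v : B →₀ ℝ} (hv : RD M s t₁ t₂ v) : Rs M s t₁ t₂ (rf M s v) := by
  obtain ⟨hp, hq, hr⟩ := hv
  refine ⟨?_, ?_, ?_⟩
  · rw [laf_ss]; linarith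
  · rw [laf_s1 h₁, laf_ss]; linarith
  · rw [laf_s1 h₂, laf_ss]; linarith

lemma dstep1 {v : B →₀ ℝ} (hv : Rs M s t₁ t₂ v) :
    RD M s t₁ t₂ (rf M t₁ v) := by
  obtain ⟨hp, hq, hr⟩ := hv
  have hc := cc_nonneg ht hm
  have hq' : 0 < la M t₁ v := by linarith
  have hr' : 0 < la M t₂ v := by linarith
  refine ⟨?_, ?_, ?_⟩ <;>
    simp only [laf_1s h₁, laf_1s h₂, laf_11, laf_12 hm, laf_21 hm] <;>
    nlinarith [mul_nonneg hc hq'.le, mul_nonneg hc hr'.le,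
      mul_nonneg (mul_nonneg hc hc) hq'.le, mul_nonneg (mul_nonneg hc hc) hr'.le,
      mul_nonneg (mul_nonneg (mul_nonneg hc hc) hc) hq'.le,
      mul_nonneg (mul_nonneg (mul_nonneg hc hc) hc) hr'.le]

lemma dstep2 {v : B →₀ ℝ} (hv : Rs M s t₁ t₂ v) :
    RD M s t₁ t₂ (rf M t₂ v) := by
  obtain ⟨hp, hq, hr⟩ := hv
  have hc := cc_nonneg ht hm
  have hq' : 0 < la M t₁ v := by linarith
  have hr' : 0 < la M t₂ v := by linarith
  refine ⟨?_, ?_, ?_⟩ <;>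
    simp only [laf_1s h₁, laf_1s h₂, laf_11, laf_12 hm, laf_21 hm] <;>
    nlinarith [mul_nonneg hc hq'.le, mul_nonneg hc hr'.le,
      mul_nonneg (mul_nonneg hc hc) hq'.le, mul_nonneg (mul_nonneg hc hc) hr'.le,
      mul_nonneg (mul_nonneg (mul_nonneg hc hc) hc) hq'.le,
      mul_nonneg (mul_nonneg (mul_nonneg hc hc) hc) hr'.le]

lemma dstep12 {v : B →₀ ℝ} (hv : Rs M s t₁ t₂ v) :
    RD M s t₁ t₂ (rf M t₁ (rf M t₂ v)) := by
  obtain ⟨hp, hq, hr⟩ := hv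
  have hc := cc_nonneg ht hm
  have hq' : 0 < la M t₁ v := by linarith
  have hr' : 0 < la M t₂ v := by linarith
  refine ⟨?_, ?_, ?_⟩ <;>
    simp only [laf_1s h₁, laf_1s h₂, laf_11, laf_12 hm, laf_21 hm] <;>
    nlinarith [mul_nonneg hc hq'.le, mul_nonneg hc hr'.le,
      mul_nonneg (mul_nonneg hc hc) hq'.le, mul_nonneg (mul_nonneg hc hc) hr'.le,
      mul_nonneg (mul_nonneg (mul_nonneg hc hc) hc) hq'.le,
      mul_nonneg (mul_nonneg (mul_nonneg hc hc) hc) hr'.le]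

lemma dstep21 {v : B →₀ ℝ} (hv : Rs M s t₁ t₂ v) :
    RD M s t₁ t₂ (rf M t₂ (rf M t₁ v)) := by
  obtain ⟨hp, hq, hr⟩ := hv
  have hc := cc_nonneg ht hm
  have hq' : 0 < la M t₁ v := by linarith
  have hr' : 0 < la M t₂ v := by linarith
  refine ⟨?_, ?_, ?_⟩ <;>
    simp only [laf_1s h₁, laf_1s h₂, laf_11, laf_12 hm, laf_21 hm] <;>
    nlinarith [mul_nonneg hc hq'.le, mul_nonneg hc hr'.le,
      mul_nonneg (mul_nonneg hc hc) hq'.le, mul_nonneg (mul_nonneg hc hc) hr'.le,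
      mul_nonneg (mul_nonneg (mul_nonneg hc hc) hc) hq'.le,
      mul_nonneg (mul_nonneg (mul_nonneg hc hc) hc) hr'.le]

lemma dstep212 {v : B →₀ ℝ} (hv : Rs M s t₁ t₂ v) :
    RD M s t₁ t₂ (rf M t₂ (rf M t₁ (rf M t₂ v))) := by
  obtain ⟨hp, hq, hr⟩ := hv
  have hc := cc_nonneg ht hm
  have hq' : 0 < la M t₁ v := by linarith
  have hr' : 0 < la M t₂ v := by linarith
  refine ⟨?_, ?_, ?_⟩ <;>
    simp only [laf_1s h₁, laf_1s h₂, laf_11, laf_12 hm, laf_21 hm] <;>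
    nlinarith [mul_nonneg hc hq'.le, mul_nonneg hc hr'.le,
      mul_nonneg (mul_nonneg hc hc) hq'.le, mul_nonneg (mul_nonneg hc hc) hr'.le,
      mul_nonneg (mul_nonneg (mul_nonneg hc hc) hc) hq'.le,
      mul_nonneg (mul_nonneg (mul_nonneg hc hc) hc) hr'.le]


-- Z regions
def Za (M : CoxeterMatrix B) (s t₁ t₂ : B) (v : B →₀ ℝ) : Prop :=
  ∃ y, Rs M s t₁ t₂ y ∧ v = rf M t₁ (rf M t₂ y)
def Zb (M : CoxeterMatrix B) (s t₁ t₂ : B) (v : B →₀ ℝ) : Prop :=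
  ∃ y, Rs M s t₁ t₂ y ∧ v = rf M t₁ y
def Zbi (M : CoxeterMatrix B) (s t₁ t₂ : B) (v : B →₀ ℝ) : Prop :=
  ∃ y, Rs M s t₁ t₂ y ∧ v = rf M t₂ y

def Zof (M : CoxeterMatrix B) (s t₁ t₂ : B) (p : Fin 2 × Bool) : (B →₀ ℝ) → Prop :=
  if p.1.val = 0 then
    (if p.2 = true then Za M s t₁ t₂ else Rs M s t₁ t₂)
  else
    (if p.2 = true then Zb M s t₁ t₂ else Zbi M s t₁ t₂)

/-- the seed vector -/
noncomputable def uvec (M : CoxeterMatrix B) (s t₁ t₂ : B) : B →₀ ℝ :=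
  (cc M t₁ t₂ - 1) • Finsupp.single s 1 - Finsupp.single t₁ 1 - Finsupp.single t₂ 1

lemma la_s_uvec : la M s (uvec M s t₁ t₂) = cc M t₁ t₂ + 1 := by
  unfold uvec
  rw [map_sub, map_sub, map_smul, la_single, la_single, la_single, kf_diag,
    kf_of_eq_zero M (show M.M t₁ s = 0 by rw [← M.symmetric]; exact h₁),
    kf_of_eq_zero M (show M.M t₂ s = 0 by rw [← M.symmetric]; exact h₂), smul_eq_mul]
  ring

lemma la_t₁_uvec : la M t₁ (uvec M s t₁ t₂) = 0 := by
  unfold uvec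
  rw [map_sub, map_sub, map_smul, la_single, la_single, la_single, kf_diag,
    kf_of_eq_zero M h₁,
    kf_of_ne_zero M (show M.M t₂ t₁ ≠ 0 by rw [← M.symmetric]; exact hm), smul_eq_mul]
  have : (M.M t₂ t₁ : ℝ) = (M.M t₁ t₂ : ℝ) := by rw [M.symmetric t₁ t₂]
  rw [this]
  unfold cc
  ring

lemma la_t₂_uvec : la M t₂ (uvec M s t₁ t₂) = 0 := by
  unfold uvec
  rw [map_sub, map_sub, map_smul, la_single, la_single, la_single, kf_diag,
    kf_of_eq_zero M h₂, kf_of_ne_zero M hm, smul_eq_mul]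
  unfold cc
  ring

lemma RD_uvec : RD M s t₁ t₂ (uvec M s t₁ t₂) := by
  have hc := cc_nonneg ht hm
  refine ⟨?_, ?_, ?_⟩
  · rw [la_s_uvec h₁ h₂ ht hm]; linarith
  · rw [la_s_uvec h₁ h₂ ht hm, la_t₁_uvec h₁ h₂ ht hm]; linarith
  · rw [la_s_uvec h₁ h₂ ht hm, la_t₂_uvec h₁ h₂ ht hm]; linarith

lemma rf_t₁_uvec : rf M t₁ (uvec M s t₁ t₂) = uvec M s t₁ t₂ := by
  rw [rf_apply, la_t₁_uvec h₁ h₂ ht hm]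
  module

lemma rf_t₂_uvec : rf M t₂ (uvec M s t₁ t₂) = uvec M s t₁ t₂ := by
  rw [rf_apply, la_t₂_uvec h₁ h₂ ht hm]
  module

/-- action of the four letters on vectors -/
noncomputable def actV (M : CoxeterMatrix B) (s t₁ t₂ : B) (p : Fin 2 × Bool)
    (v : B →₀ ℝ) : B →₀ ℝ :=
  if p.1.val = 0 then
    (if p.2 = true then rf M t₁ (rf M t₂ (rf M s v)) else rf M s (rf M t₂ (rf M t₁ v)))
  else
    (if p.2 = true then rf M t₁ (rf M s (rf M t₂ v)) else rf M t₂ (rf M s (rf M t₁ v)))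

lemma base_lemma (p : Fin 2 × Bool) :
    Zof M s t₁ t₂ p (actV M s t₁ t₂ p (uvec M s t₁ t₂)) := by
  have hRs : Rs M s t₁ t₂ (rf M s (uvec M s t₁ t₂)) :=
    sstep h₁ h₂ ht hm (RD_uvec h₁ h₂ ht hm)
  obtain ⟨i, bb⟩ := p
  fin_cases i <;> cases bb <;> simp only [Zof, actV] <;> norm_num
  · rw [rf_t₁_uvec h₁ h₂ ht hm, rf_t₂_uvec h₁ h₂ ht hm]
    exact hRs
  · exact ⟨rf M s (uvec M s t₁ t₂), hRs, rfl⟩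
  · rw [rf_t₁_uvec h₁ h₂ ht hm]
    exact ⟨rf M s (uvec M s t₁ t₂), hRs, rfl⟩
  · rw [rf_t₂_uvec h₁ h₂ ht hm]
    exact ⟨rf M s (uvec M s t₁ t₂), hRs, rfl⟩

lemma step_lemma (p q : Fin 2 × Bool) (hpq : ¬(p.1 = q.1 ∧ p.2 = !q.2))
    {v : B →₀ ℝ} (hv : Zof M s t₁ t₂ q v) :
    Zof M s t₁ t₂ p (actV M s t₁ t₂ p v) := by
  obtain ⟨i, bb⟩ := p
  obtain ⟨j, bb'⟩ := q
  fin_cases i <;> fin_cases j <;> cases bb <;> cases bb' <;>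
    simp only [Zof, actV] at hv ⊢ <;> norm_num at hv ⊢
  -- g1 : a⁻¹ ← a⁻¹
  · exact sstep h₁ h₂ ht hm (dstep21 h₁ h₂ ht hm hv)
  -- g2 : a⁻¹ ← a : forbidden
  · exact (hpq ⟨rfl, rfl⟩).elim
  -- g3 : a ← a⁻¹ : forbidden
  · exact (hpq ⟨rfl, rfl⟩).elim
  -- g4 : a ← a
  · obtain ⟨y, hy, rfl⟩ := hv
    exact ⟨rf M s (rf M t₁ (rf M t₂ y)),
      sstep h₁ h₂ ht hm (dstep12 h₁ h₂ ht hm hy), rfl⟩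
  -- g5 : a⁻¹ ← b⁻¹
  · obtain ⟨y, hy, rfl⟩ := hv
    exact sstep h₁ h₂ ht hm (dstep212 h₁ h₂ ht hm hy)
  -- g6 : a⁻¹ ← b
  · obtain ⟨y, hy, rfl⟩ := hv
    rw [rf_invol]
    exact sstep h₁ h₂ ht hm (dstep2 h₁ h₂ ht hm hy)
  -- g7 : a ← b⁻¹
  · obtain ⟨y, hy, rfl⟩ := hv
    exact ⟨rf M s (rf M t₂ y), sstep h₁ h₂ ht hm (dstep2 h₁ h₂ ht hm hy), rfl⟩
  -- g8 : a ← b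
  · obtain ⟨y, hy, rfl⟩ := hv
    exact ⟨rf M s (rf M t₁ y), sstep h₁ h₂ ht hm (dstep1 h₁ h₂ ht hm hy), rfl⟩
  -- g9 : b⁻¹ ← a⁻¹
  · exact ⟨rf M s (rf M t₁ v), sstep h₁ h₂ ht hm (dstep1 h₁ h₂ ht hm hv), rfl⟩
  -- g10 : b⁻¹ ← a
  · obtain ⟨y, hy, rfl⟩ := hv
    rw [rf_invol]
    exact ⟨rf M s (rf M t₂ y), sstep h₁ h₂ ht hm (dstep2 h₁ h₂ ht hm hy), rfl⟩
  -- g11 : b ← a⁻¹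
  · exact ⟨rf M s (rf M t₂ v), sstep h₁ h₂ ht hm (dstep2 h₁ h₂ ht hm hv), rfl⟩
  -- g12 : b ← a
  · obtain ⟨y, hy, rfl⟩ := hv
    exact ⟨rf M s (rf M t₂ (rf M t₁ (rf M t₂ y))),
      sstep h₁ h₂ ht hm (dstep212 h₁ h₂ ht hm hy), rfl⟩
  -- g13 : b⁻¹ ← b⁻¹
  · obtain ⟨y, hy, rfl⟩ := hv
    exact ⟨rf M s (rf M t₁ (rf M t₂ y)),
      sstep h₁ h₂ ht hm (dstep12 h₁ h₂ ht hm hy), rfl⟩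
  -- g14 : b⁻¹ ← b : forbidden
  · exact (hpq ⟨rfl, rfl⟩).elim
  -- g15 : b ← b⁻¹ : forbidden
  · exact (hpq ⟨rfl, rfl⟩).elim
  -- g16 : b ← b
  · obtain ⟨y, hy, rfl⟩ := hv
    exact ⟨rf M s (rf M t₂ (rf M t₁ y)),
      sstep h₁ h₂ ht hm (dstep21 h₁ h₂ ht hm hy), rfl⟩


lemma not_Zof_uvec (p : Fin 2 × Bool) : ¬ Zof M s t₁ t₂ p (uvec M s t₁ t₂) := by
  have hc := cc_nonneg ht hm
  obtain ⟨i, bb⟩ := p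
  fin_cases i <;> cases bb <;> simp only [Zof] <;> norm_num
  -- (0,F): ¬ Rs u
  · intro hv
    have h3 := hv.1
    rw [la_s_uvec h₁ h₂ ht hm] at h3
    linarith
  -- (0,T): ¬ Za u
  · rintro ⟨y, hy, heq⟩
    have h3 := congrArg (la M t₁) heq
    rw [la_t₁_uvec h₁ h₂ ht hm, laf_11, laf_21 hm] at h3
    obtain ⟨hp', hq', hr'⟩ := hy
    have hq2 : 0 < la M t₁ y := by linarith
    have hr2 : 0 < la M t₂ y := by linarith
    nlinarith [mul_nonneg hc hr2.le]
  -- (1,F): ¬ Zbi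
  · rintro ⟨y, hy, heq⟩
    have h3 := congrArg (la M t₂) heq
    rw [la_t₂_uvec h₁ h₂ ht hm, laf_11] at h3
    obtain ⟨hp', hq', hr'⟩ := hy
    linarith
  -- (1,T): ¬ Zb
  · rintro ⟨y, hy, heq⟩
    have h3 := congrArg (la M t₁) heq
    rw [la_t₁_uvec h₁ h₂ ht hm, laf_11] at h3
    obtain ⟨hp', hq', hr'⟩ := hy
    linarith

end PingPong

/-- with `m(s,t₁) = m(s,t₂) = ∞` and `m(t₁,t₂)` finite, the subgroup
generated by `t₁t₂s` and `t₁st₂` is free of rank 2: the homomorphism from the free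
group on two generators sending them to these elements is injective. -/
theorem free_subgroup_of_rank_two {B W : Type*} [Group W] {M : CoxeterMatrix B}
    (cs : CoxeterSystem M W) (s t₁ t₂ : B)
    (hst₁ : s ≠ t₁) (hst₂ : s ≠ t₂) (ht : t₁ ≠ t₂)
    (h₁ : M s t₁ = 0) (h₂ : M s t₂ = 0) (hm : M t₁ t₂ ≠ 0) :
    Function.Injective
      (FreeGroup.lift
        ![cs.simple t₁ * cs.simple t₂ * cs.simple s,
          cs.simple t₁ * cs.simple s * cs.simple t₂] :
        FreeGroup (Fin 2) →* W) := by
  classical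
  set Φ := geomRep M cs with hΦ
  set a : W := cs.simple t₁ * cs.simple t₂ * cs.simple s with ha
  set b : W := cs.simple t₁ * cs.simple s * cs.simple t₂ with hb
  have hact : ∀ (p : Fin 2 × Bool) (v : B →₀ ℝ),
      Φ (cond p.2 ((![a, b] : Fin 2 → W) p.1) (((![a, b] : Fin 2 → W) p.1)⁻¹)) v
        = actV M s t₁ t₂ p v := by
    intro p v
    obtain ⟨i, bb⟩ := p
    fin_cases i <;> cases bb <;>
      simp only [Matrix.cons_val_zero, Matrix.cons_val_one, Matrix.head_cons,
        cond_false, cond_true, actV] <;> norm_num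
    · rw [ha, mul_inv_rev, mul_inv_rev, cs.inv_simple, cs.inv_simple, cs.inv_simple,
        map_mul, map_mul, Module.End.mul_apply, Module.End.mul_apply,
        geomRep_simple, geomRep_simple, geomRep_simple]
    · rw [ha, map_mul, map_mul, Module.End.mul_apply, Module.End.mul_apply,
        geomRep_simple, geomRep_simple, geomRep_simple]
    · rw [hb, mul_inv_rev, mul_inv_rev, cs.inv_simple, cs.inv_simple, cs.inv_simple,
        map_mul, map_mul, Module.End.mul_apply, Module.End.mul_apply,
        geomRep_simple, geomRep_simple, geomRep_simple]
    · rw [hb, map_mul, map_mul, Module.End.mul_apply, Module.End.mul_apply,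
        geomRep_simple, geomRep_simple, geomRep_simple]
  rw [injective_iff_map_eq_one]
  intro g hg
  by_contra hg1
  set L := g.toWord with hL
  have hLnil : L ≠ [] := fun h => hg1 (FreeGroup.toWord_eq_nil_iff.mp h)
  have hnoadj : ∀ (L₂ L₃ : List (Fin 2 × Bool)) (x : Fin 2) (bb : Bool),
      L ≠ L₂ ++ (x, bb) :: (x, !bb) :: L₃ := by
    intro L₂ L₃ x bb h
    exact FreeGroup.reduce.not (L₁ := L)
      (by rw [hL, FreeGroup.reduce_toWord, ← hL]; exact h)
  have mainInd : ∀ (Lw : List (Fin 2 × Bool)) (p : Fin 2 × Bool)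
      (rest : List (Fin 2 × Bool)), Lw = p :: rest →
      (∀ (L₂ L₃ : List (Fin 2 × Bool)) (x : Fin 2) (bb : Bool),
        Lw ≠ L₂ ++ (x, bb) :: (x, !bb) :: L₃) →
      Zof M s t₁ t₂ p
        (Φ (FreeGroup.lift ![a, b] (FreeGroup.mk Lw)) (uvec M s t₁ t₂)) := by
    intro Lw
    induction Lw with
    | nil =>
      intro p rest h
      exact absurd h (by simp)
    | cons q rest ih =>
      intro p rest' hEq hno
      have hq : q = p := by injection hEq
      have hrest : rest = rest' := by injection hEq
      subst hq
      subst hrest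
      have hsplit : (FreeGroup.mk (q :: rest) : FreeGroup (Fin 2))
          = FreeGroup.mk [q] * FreeGroup.mk rest :=
        (FreeGroup.mul_mk (L₁ := [q]) (L₂ := rest)).symm
      have hone : FreeGroup.lift ![a, b] (FreeGroup.mk [q])
          = cond q.2 ((![a, b] : Fin 2 → W) q.1) (((![a, b] : Fin 2 → W) q.1)⁻¹) := by
        rw [FreeGroup.lift_mk]
        simp
      rw [hsplit, map_mul, map_mul, Module.End.mul_apply, hone, hact]
      cases rest with
      | nil =>
        rw [show (FreeGroup.mk ([] : List (Fin 2 × Bool))) = 1 from rfl,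
          map_one, map_one, Module.End.one_apply]
        exact base_lemma h₁ h₂ ht hm q
      | cons q2 rest2 =>
        have hq2 : ¬(q.1 = q2.1 ∧ q.2 = !q2.2) := by
          rintro ⟨hx, hbb⟩
          apply hno [] rest2 q.1 q.2
          have hq2e : q2 = (q.1, !q.2) := by
            obtain ⟨x2, b2⟩ := q2
            simp only at hx hbb
            rw [← hx, hbb, Bool.not_not]
          rw [hq2e]
          simp
        have htail : ∀ (L₂ L₃ : List (Fin 2 × Bool)) (x : Fin 2) (bb : Bool),
            (q2 :: rest2) ≠ L₂ ++ (x, bb) :: (x, !bb) :: L₃ := by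
          intro L₂ L₃ x bb h
          exact hno (q :: L₂) L₃ x bb (by rw [List.cons_append, h])
        exact step_lemma h₁ h₂ ht hm q q2 hq2 (ih q2 rest2 rfl htail)
  obtain ⟨p, rest, hLcons⟩ : ∃ p rest, L = p :: rest := by
    cases hLc : L with
    | nil => exact absurd hLc hLnil
    | cons p rest => exact ⟨p, rest, rfl⟩
  have hZ := mainInd L p rest hLcons hnoadj
  rw [hL, FreeGroup.mk_toWord] at hZ
  rw [hg, map_one, Module.End.one_apply] at hZ
  exact not_Zof_uvec h₁ h₂ ht hm p hZ
end

section
/- Let W be the Weyl group of type D₄ with simple reflections s₁, s₂, s₃, s₄, where s₂ is the central node (m(s₂,s_i) = 3 for i = 1,3,4 and m(s_i,s_j) = 2 for distinct i,j ∈ {1,3,4}). Then the element v = s₂s₄s₁s₃s₂s₁s₃s₂s₄s₂s₁ is an involution of length 11, and v is not equal to the longest element of any standard parabolic subgroup W_I, I ⊆ {s₁,s₂,s₃,s₄}. -/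
/-- The Coxeter matrix of type D₄, with central node indexed by `1`
(so `s₁,s₂,s₃,s₄` of the paper correspond to indices `0,1,2,3`). -/
def D4Matrix : CoxeterMatrix (Fin 4) :=
  ⟨!![1, 3, 2, 2; 3, 1, 3, 3; 2, 3, 1, 2; 2, 3, 2, 1], by decide, by decide,
    fun i i' h => by fin_cases i <;> fin_cases i' <;> simp_all <;> decide⟩

namespace D4Proof

abbrev G8 := Function.End (Fin 8)

def tf : Fin 4 → G8 := ![![1,0,2,3,5,4,6,7],![0,2,1,3,4,6,5,7],![0,1,3,2,4,5,7,6],![0,1,7,6,4,5,3,2]]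

instance : DecidableEq G8 := inferInstanceAs (DecidableEq (Fin 8 → Fin 8))

lemma liftable : D4Matrix.IsLiftable tf := by
  have h : ∀ i i', (tf i * tf i') ^ (D4Matrix i i') = 1 := by decide
  exact h

/-- base-8 encoding of a function `Fin 8 → Fin 8` -/
def enc (g : G8) : ℕ := (g 0).val + 8 * (g 1).val + 64 * (g 2).val + 512 * (g 3).val + 4096 * (g 4).val + 32768 * (g 5).val + 262144 * (g 6).val + 2097152 * (g 7).val

/-- digit extraction -/
def dg (m k : ℕ) : ℕ := m / 8 ^ k % 8

/-- composition on codes -/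
def FlG (m n : ℕ) : ℕ := dg m (dg n 0) + 8 * dg m (dg n 1) + 64 * dg m (dg n 2) + 512 * dg m (dg n 3) + 4096 * dg m (dg n 4) + 32768 * dg m (dg n 5) + 262144 * dg m (dg n 6) + 2097152 * dg m (dg n 7)

lemma d0 (a : G8) : dg (enc a) 0 = (a 0).val := by
  have h0 := (a 0).isLt; have h1 := (a 1).isLt; have h2 := (a 2).isLt; have h3 := (a 3).isLt; have h4 := (a 4).isLt; have h5 := (a 5).isLt; have h6 := (a 6).isLt; have h7 := (a 7).isLt
  unfold dg enc
  norm_num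
  omega
lemma d1 (a : G8) : dg (enc a) 1 = (a 1).val := by
  have h0 := (a 0).isLt; have h1 := (a 1).isLt; have h2 := (a 2).isLt; have h3 := (a 3).isLt; have h4 := (a 4).isLt; have h5 := (a 5).isLt; have h6 := (a 6).isLt; have h7 := (a 7).isLt
  unfold dg enc
  norm_num
  omega
lemma d2 (a : G8) : dg (enc a) 2 = (a 2).val := by
  have h0 := (a 0).isLt; have h1 := (a 1).isLt; have h2 := (a 2).isLt; have h3 := (a 3).isLt; have h4 := (a 4).isLt; have h5 := (a 5).isLt; have h6 := (a 6).isLt; have h7 := (a 7).isLt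
  unfold dg enc
  norm_num
  omega
lemma d3 (a : G8) : dg (enc a) 3 = (a 3).val := by
  have h0 := (a 0).isLt; have h1 := (a 1).isLt; have h2 := (a 2).isLt; have h3 := (a 3).isLt; have h4 := (a 4).isLt; have h5 := (a 5).isLt; have h6 := (a 6).isLt; have h7 := (a 7).isLt
  unfold dg enc
  norm_num
  omega
lemma d4 (a : G8) : dg (enc a) 4 = (a 4).val := by
  have h0 := (a 0).isLt; have h1 := (a 1).isLt; have h2 := (a 2).isLt; have h3 := (a 3).isLt; have h4 := (a 4).isLt; have h5 := (a 5).isLt; have h6 := (a 6).isLt; have h7 := (a 7).isLt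
  unfold dg enc
  norm_num
  omega
lemma d5 (a : G8) : dg (enc a) 5 = (a 5).val := by
  have h0 := (a 0).isLt; have h1 := (a 1).isLt; have h2 := (a 2).isLt; have h3 := (a 3).isLt; have h4 := (a 4).isLt; have h5 := (a 5).isLt; have h6 := (a 6).isLt; have h7 := (a 7).isLt
  unfold dg enc
  norm_num
  omega
lemma d6 (a : G8) : dg (enc a) 6 = (a 6).val := by
  have h0 := (a 0).isLt; have h1 := (a 1).isLt; have h2 := (a 2).isLt; have h3 := (a 3).isLt; have h4 := (a 4).isLt; have h5 := (a 5).isLt; have h6 := (a 6).isLt; have h7 := (a 7).isLt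
  unfold dg enc
  norm_num
  omega
lemma d7 (a : G8) : dg (enc a) 7 = (a 7).val := by
  have h0 := (a 0).isLt; have h1 := (a 1).isLt; have h2 := (a 2).isLt; have h3 := (a 3).isLt; have h4 := (a 4).isLt; have h5 := (a 5).isLt; have h6 := (a 6).isLt; have h7 := (a 7).isLt
  unfold dg enc
  norm_num
  omega

lemma dgy (a : G8) (y : Fin 8) : dg (enc a) y.val = (a y).val := by
  rcases y with ⟨k, hk⟩
  interval_cases k
  · exact d0 a
  · exact d1 a
  · exact d2 a
  · exact d3 a
  · exact d4 a
  · exact d5 a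
  · exact d6 a
  · exact d7 a

lemma bridge2 (a b : G8) : enc (a * b) = FlG (enc a) (enc b) := by
  have L : enc (a * b) = (a (b 0)).val + 8 * (a (b 1)).val + 64 * (a (b 2)).val + 512 * (a (b 3)).val + 4096 * (a (b 4)).val + 32768 * (a (b 5)).val + 262144 * (a (b 6)).val + 2097152 * (a (b 7)).val := rfl
  have R : FlG (enc a) (enc b) = dg (enc a) (dg (enc b) 0) + 8 * dg (enc a) (dg (enc b) 1) + 64 * dg (enc a) (dg (enc b) 2) + 512 * dg (enc a) (dg (enc b) 3) + 4096 * dg (enc a) (dg (enc b) 4) + 32768 * dg (enc a) (dg (enc b) 5) + 262144 * dg (enc a) (dg (enc b) 6) + 2097152 * dg (enc a) (dg (enc b) 7) := rfl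
  rw [L, R, d0 b, d1 b, d2 b, d3 b, d4 b, d5 b, d6 b, d7 b, dgy a (b 0), dgy a (b 1), dgy a (b 2), dgy a (b 3), dgy a (b 4), dgy a (b 5), dgy a (b 6), dgy a (b 7)]

/-- positivity of the image of a root (given by its two coordinates) -/
def posN (a b : ℕ) : Bool := if a % 4 < b % 4 then decide (a < 4) else decide (4 ≤ b)
def Rts : List (ℕ × ℕ) := [(0,1),(0,2),(0,3),(1,2),(1,3),(2,3),(0,5),(0,6),(0,7),(1,6),(1,7),(2,7)]
/-- number of inversions of the signed permutation with code `n` -/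
def NF (n : ℕ) : ℕ := Rts.countP (fun p => ! posN (dg n p.1) (dg n p.2))

/-- codes of all 192 elements of W(D₄) -/
def EN : List ℕ := [342391,371070,489811,518490,571823,629181,719243,776601,829934,858613,977354,1006033,1407091,1435770,1521751,1550430,1636523,1693881,1751183,1808541,1894634,1923313,2009294,2037973,2177847,2206526,2325267,2353946,2636711,2722748,2784131,2870168,2894822,2952180,3042242,3099600,3242547,3271226,3357207,3385886,3701411,3787448,3816071,3902108,3959522,4016880,4074182,4131540,4242735,4300093,4390155,4447513,4472167,4558204,4619587,4705624,4988389,5017068,5135809,5164488,5307435,5364793,5422095,5479453,5536867,5622904,5651527,5737564,6053089,6081768,6167749,6196428,6336302,6364981,6483722,6512401,6565734,6623092,6713154,6770512,6823845,6852524,6971265,6999944,7401002,7429681,7515662,7544341,7630434,7687792,7745094,7802452,7888545,7917224,8003205,8031884,8745331,8774010,8859991,8888670,8974763,9032121,9089423,9146781,9232874,9261553,9347534,9376213,9777271,9805950,9924691,9953370,10006703,10064061,10154123,10211481,10264814,10293493,10412234,10440913,10580787,10609466,10695447,10724126,11039651,11125688,11154311,11240348,11297762,11355120,11412422,11469780,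11612727,11641406,11760147,11788826,12071591,12157628,12219011,12305048,12329702,12387060,12477122,12534480,12645675,12703033,12760335,12817693,12875107,12961144,12989767,13075804,13391329,13420008,13505989,13534668,13677615,13734973,13825035,13882393,13907047,13993084,14054467,14140504,14423269,14451948,14570689,14599368,14739242,14767921,14853902,14882581,14968674,15026032,15083334,15140692,15226785,15255464,15341445,15370124,15771182,15799861,15918602,15947281,16000614,16057972,16148034,16205392,16258725,16287404,16406145,16434824]

set_option maxRecDepth 20000 in
lemma K1 : ∀ n ∈ EN, ∀ i : Fin 4, FlG (enc (tf i)) n ∈ EN ∧ NF (FlG (enc (tf i)) n) ≤ NF n + 1 := by decide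

lemma K0 : enc (1 : G8) ∈ EN ∧ NF (enc (1 : G8)) = 0 := by decide

def H0N : List ℕ := [2870168,3099600,3787448,4016880,4705624,5164488,5622904,6081768,6770512,6999944,7687792,7917224,11125688,11355120,12305048,12534480,12961144,13420008,14140504,14599368,15026032,15255464,16205392,16434824]
def H1N : List ℕ := [5135809,5164488,6971265,6999944,14570689,14599368,16406145,16434824]
def H2N : List ℕ := [977354,1006033,1435770,1521751,1693881,1751183,3042242,3099600,3271226,3357207,3787448,3816071,5135809,5164488,5364793,5422095,5622904,5651527,15918602,15947281,16148034,16205392,16406145,16434824]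
def H3N : List ℕ := [9924691,9953370,10154123,10211481,10412234,10440913,11760147,11788826,12219011,12305048,12477122,12534480,13825035,13882393,14054467,14140504,14570689,14599368,15918602,15947281,16148034,16205392,16406145,16434824]

def H0M : Submonoid G8 where
  carrier := {g | enc g ∈ H0N}
  one_mem' := by show enc (1 : G8) ∈ H0N; decide
  mul_mem' := fun {a b} ha hb => by
    show enc (a * b) ∈ H0N
    rw [bridge2]
    exact (by decide : ∀ m ∈ H0N, ∀ n ∈ H0N, FlG m n ∈ H0N) _ ha _ hb

def H1M : Submonoid G8 where
  carrier := {g | enc g ∈ H1N}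
  one_mem' := by show enc (1 : G8) ∈ H1N; decide
  mul_mem' := fun {a b} ha hb => by
    show enc (a * b) ∈ H1N
    rw [bridge2]
    exact (by decide : ∀ m ∈ H1N, ∀ n ∈ H1N, FlG m n ∈ H1N) _ ha _ hb

def H2M : Submonoid G8 where
  carrier := {g | enc g ∈ H2N}
  one_mem' := by show enc (1 : G8) ∈ H2N; decide
  mul_mem' := fun {a b} ha hb => by
    show enc (a * b) ∈ H2N
    rw [bridge2]
    exact (by decide : ∀ m ∈ H2N, ∀ n ∈ H2N, FlG m n ∈ H2N) _ ha _ hb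

def H3M : Submonoid G8 where
  carrier := {g | enc g ∈ H3N}
  one_mem' := by show enc (1 : G8) ∈ H3N; decide
  mul_mem' := fun {a b} ha hb => by
    show enc (a * b) ∈ H3N
    rw [bridge2]
    exact (by decide : ∀ m ∈ H3N, ∀ n ∈ H3N, FlG m n ∈ H3N) _ ha _ hb

section
variable {W : Type*} [Group W] (cs : CoxeterSystem D4Matrix W)

def ph : W →* G8 := cs.lift ⟨tf, liftable⟩

lemma ph_simple (i : Fin 4) : ph cs (cs.simple i) = tf i :=
  cs.lift_apply_simple liftable i

lemma ind (ω : List (Fin 4)) :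
    enc (ph cs (cs.wordProd ω)) ∈ EN ∧ NF (enc (ph cs (cs.wordProd ω))) ≤ ω.length := by
  induction ω with
  | nil =>
    rw [cs.wordProd_nil, map_one]
    exact ⟨K0.1, le_of_eq K0.2⟩
  | cons i ω ih =>
    obtain ⟨h1, h2⟩ := ih
    rw [cs.wordProd_cons, map_mul, ph_simple, bridge2]
    obtain ⟨g1, g2⟩ := K1 _ h1 i
    refine ⟨g1, ?_⟩
    simp only [List.length_cons]
    omega

lemma Nle (u : W) : NF (enc (ph cs u)) ≤ cs.length u := by
  obtain ⟨ω, hlen, hu⟩ := cs.exists_reduced_word u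
  have h := (ind cs ω).2
  rw [← hu] at h
  have hlen' := hlen.eq
  rw [← hu] at hlen'
  omega

lemma ph_wordProd (ω : List (Fin 4)) : ph cs (cs.wordProd ω) = (ω.map tf).prod := by
  induction ω with
  | nil => rw [cs.wordProd_nil, map_one, List.map_nil, List.prod_nil]
  | cons i ω ih => rw [cs.wordProd_cons, map_mul, ph_simple, List.map_cons, List.prod_cons, ih]

lemma comm_aux (i j : Fin 4) (h2 : (cs.simple i * cs.simple j)^2 = 1) :
    cs.simple i * cs.simple j = cs.simple j * cs.simple i := by
  have hx : (cs.simple i * cs.simple j) * (cs.simple i * cs.simple j) = 1 := by rw [← sq]; exact h2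
  have h := (inv_eq_of_mul_eq_one_right hx).symm
  rwa [mul_inv_rev, cs.inv_simple, cs.inv_simple] at h

lemma braid_aux (i j : Fin 4) (h3 : (cs.simple i * cs.simple j)^3 = 1) :
    cs.simple i * cs.simple j * cs.simple i = cs.simple j * cs.simple i * cs.simple j := by
  have hX : (cs.simple j * cs.simple i * cs.simple j) * (cs.simple j * cs.simple i * cs.simple j) = 1 := by
    simp [mul_assoc, cs.simple_mul_simple_cancel_left, cs.simple_mul_simple_self]
  have h2 : (cs.simple i * cs.simple j * cs.simple i) * (cs.simple j * cs.simple i * cs.simple j) = 1 := by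
    have h := h3
    rw [pow_succ, pow_succ, pow_one] at h
    simp only [mul_assoc] at h ⊢
    exact h
  exact mul_right_cancel (h2.trans hX.symm)

lemma wp_b_0_1 : cs.wordProd [0,1,0] = cs.wordProd [1,0,1] := by
  have h := cs.simple_mul_simple_pow 0 1
  rw [show D4Matrix 0 1 = 3 from rfl] at h
  simp only [CoxeterSystem.wordProd_cons, CoxeterSystem.wordProd_nil, mul_one, ← mul_assoc]
  exact braid_aux cs 0 1 h

lemma wp_b_1_0 : cs.wordProd [1,0,1] = cs.wordProd [0,1,0] := by
  have h := cs.simple_mul_simple_pow 1 0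
  rw [show D4Matrix 1 0 = 3 from rfl] at h
  simp only [CoxeterSystem.wordProd_cons, CoxeterSystem.wordProd_nil, mul_one, ← mul_assoc]
  exact braid_aux cs 1 0 h

lemma wp_b_1_2 : cs.wordProd [1,2,1] = cs.wordProd [2,1,2] := by
  have h := cs.simple_mul_simple_pow 1 2
  rw [show D4Matrix 1 2 = 3 from rfl] at h
  simp only [CoxeterSystem.wordProd_cons, CoxeterSystem.wordProd_nil, mul_one, ← mul_assoc]
  exact braid_aux cs 1 2 h

lemma wp_b_1_3 : cs.wordProd [1,3,1] = cs.wordProd [3,1,3] := by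
  have h := cs.simple_mul_simple_pow 1 3
  rw [show D4Matrix 1 3 = 3 from rfl] at h
  simp only [CoxeterSystem.wordProd_cons, CoxeterSystem.wordProd_nil, mul_one, ← mul_assoc]
  exact braid_aux cs 1 3 h

lemma wp_b_2_1 : cs.wordProd [2,1,2] = cs.wordProd [1,2,1] := by
  have h := cs.simple_mul_simple_pow 2 1
  rw [show D4Matrix 2 1 = 3 from rfl] at h
  simp only [CoxeterSystem.wordProd_cons, CoxeterSystem.wordProd_nil, mul_one, ← mul_assoc]
  exact braid_aux cs 2 1 h

lemma wp_b_3_1 : cs.wordProd [3,1,3] = cs.wordProd [1,3,1] := by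
  have h := cs.simple_mul_simple_pow 3 1
  rw [show D4Matrix 3 1 = 3 from rfl] at h
  simp only [CoxeterSystem.wordProd_cons, CoxeterSystem.wordProd_nil, mul_one, ← mul_assoc]
  exact braid_aux cs 3 1 h

lemma wp_c_0_2 : cs.wordProd [0,2] = cs.wordProd [2,0] := by
  have h := cs.simple_mul_simple_pow 0 2
  rw [show D4Matrix 0 2 = 2 from rfl] at h
  simp only [CoxeterSystem.wordProd_cons, CoxeterSystem.wordProd_nil, mul_one, ← mul_assoc]
  exact comm_aux cs 0 2 h

lemma wp_c_0_3 : cs.wordProd [0,3] = cs.wordProd [3,0] := by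
  have h := cs.simple_mul_simple_pow 0 3
  rw [show D4Matrix 0 3 = 2 from rfl] at h
  simp only [CoxeterSystem.wordProd_cons, CoxeterSystem.wordProd_nil, mul_one, ← mul_assoc]
  exact comm_aux cs 0 3 h

lemma wp_c_2_0 : cs.wordProd [2,0] = cs.wordProd [0,2] := by
  have h := cs.simple_mul_simple_pow 2 0
  rw [show D4Matrix 2 0 = 2 from rfl] at h
  simp only [CoxeterSystem.wordProd_cons, CoxeterSystem.wordProd_nil, mul_one, ← mul_assoc]
  exact comm_aux cs 2 0 h

lemma wp_c_2_3 : cs.wordProd [2,3] = cs.wordProd [3,2] := by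
  have h := cs.simple_mul_simple_pow 2 3
  rw [show D4Matrix 2 3 = 2 from rfl] at h
  simp only [CoxeterSystem.wordProd_cons, CoxeterSystem.wordProd_nil, mul_one, ← mul_assoc]
  exact comm_aux cs 2 3 h

lemma wp_c_3_0 : cs.wordProd [3,0] = cs.wordProd [0,3] := by
  have h := cs.simple_mul_simple_pow 3 0
  rw [show D4Matrix 3 0 = 2 from rfl] at h
  simp only [CoxeterSystem.wordProd_cons, CoxeterSystem.wordProd_nil, mul_one, ← mul_assoc]
  exact comm_aux cs 3 0 h

lemma chain : cs.wordProd [1,3,0,2,1,0,2,1,3,1,0] = cs.wordProd [0,1,3,1,2,0,1,2,0,3,1] := by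
  calc cs.wordProd ([1,3,0,2,1,0,2,1,3,1,0] : List (Fin 4))
    _ = cs.wordProd [1,0,3,2,1,0,2,1,3,1,0] := by
      rw [show ([1,3,0,2,1,0,2,1,3,1,0] : List (Fin 4)) = [1] ++ ([3,0] ++ [2,1,0,2,1,3,1,0]) from rfl,
          show ([1,0,3,2,1,0,2,1,3,1,0] : List (Fin 4)) = [1] ++ ([0,3] ++ [2,1,0,2,1,3,1,0]) from rfl,
          cs.wordProd_append, cs.wordProd_append, cs.wordProd_append, cs.wordProd_append,
          wp_c_3_0 cs]
    _ = cs.wordProd [1,0,3,2,1,2,0,1,3,1,0] := by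
      rw [show ([1,0,3,2,1,0,2,1,3,1,0] : List (Fin 4)) = [1,0,3,2,1] ++ ([0,2] ++ [1,3,1,0]) from rfl,
          show ([1,0,3,2,1,2,0,1,3,1,0] : List (Fin 4)) = [1,0,3,2,1] ++ ([2,0] ++ [1,3,1,0]) from rfl,
          cs.wordProd_append, cs.wordProd_append, cs.wordProd_append, cs.wordProd_append,
          wp_c_0_2 cs]
    _ = cs.wordProd [1,0,3,1,2,1,0,1,3,1,0] := by
      rw [show ([1,0,3,2,1,2,0,1,3,1,0] : List (Fin 4)) = [1,0,3] ++ ([2,1,2] ++ [0,1,3,1,0]) from rfl,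
          show ([1,0,3,1,2,1,0,1,3,1,0] : List (Fin 4)) = [1,0,3] ++ ([1,2,1] ++ [0,1,3,1,0]) from rfl,
          cs.wordProd_append, cs.wordProd_append, cs.wordProd_append, cs.wordProd_append,
          wp_b_2_1 cs]
    _ = cs.wordProd [1,0,3,1,2,0,1,0,3,1,0] := by
      rw [show ([1,0,3,1,2,1,0,1,3,1,0] : List (Fin 4)) = [1,0,3,1,2] ++ ([1,0,1] ++ [3,1,0]) from rfl,
          show ([1,0,3,1,2,0,1,0,3,1,0] : List (Fin 4)) = [1,0,3,1,2] ++ ([0,1,0] ++ [3,1,0]) from rfl,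
          cs.wordProd_append, cs.wordProd_append, cs.wordProd_append, cs.wordProd_append,
          wp_b_1_0 cs]
    _ = cs.wordProd [1,0,3,1,0,2,1,0,3,1,0] := by
      rw [show ([1,0,3,1,2,0,1,0,3,1,0] : List (Fin 4)) = [1,0,3,1] ++ ([2,0] ++ [1,0,3,1,0]) from rfl,
          show ([1,0,3,1,0,2,1,0,3,1,0] : List (Fin 4)) = [1,0,3,1] ++ ([0,2] ++ [1,0,3,1,0]) from rfl,
          cs.wordProd_append, cs.wordProd_append, cs.wordProd_append, cs.wordProd_append,
          wp_c_2_0 cs]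
    _ = cs.wordProd [1,0,3,1,0,2,1,3,0,1,0] := by
      rw [show ([1,0,3,1,0,2,1,0,3,1,0] : List (Fin 4)) = [1,0,3,1,0,2,1] ++ ([0,3] ++ [1,0]) from rfl,
          show ([1,0,3,1,0,2,1,3,0,1,0] : List (Fin 4)) = [1,0,3,1,0,2,1] ++ ([3,0] ++ [1,0]) from rfl,
          cs.wordProd_append, cs.wordProd_append, cs.wordProd_append, cs.wordProd_append,
          wp_c_0_3 cs]
    _ = cs.wordProd [1,0,3,1,0,2,1,3,1,0,1] := by
      rw [show ([1,0,3,1,0,2,1,3,0,1,0] : List (Fin 4)) = [1,0,3,1,0,2,1,3] ++ ([0,1,0] ++ []) from rfl,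
          show ([1,0,3,1,0,2,1,3,1,0,1] : List (Fin 4)) = [1,0,3,1,0,2,1,3] ++ ([1,0,1] ++ []) from rfl,
          cs.wordProd_append, cs.wordProd_append, cs.wordProd_append, cs.wordProd_append,
          wp_b_0_1 cs]
    _ = cs.wordProd [1,0,3,1,0,2,3,1,3,0,1] := by
      rw [show ([1,0,3,1,0,2,1,3,1,0,1] : List (Fin 4)) = [1,0,3,1,0,2] ++ ([1,3,1] ++ [0,1]) from rfl,
          show ([1,0,3,1,0,2,3,1,3,0,1] : List (Fin 4)) = [1,0,3,1,0,2] ++ ([3,1,3] ++ [0,1]) from rfl,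
          cs.wordProd_append, cs.wordProd_append, cs.wordProd_append, cs.wordProd_append,
          wp_b_1_3 cs]
    _ = cs.wordProd [1,0,3,1,0,3,2,1,3,0,1] := by
      rw [show ([1,0,3,1,0,2,3,1,3,0,1] : List (Fin 4)) = [1,0,3,1,0] ++ ([2,3] ++ [1,3,0,1]) from rfl,
          show ([1,0,3,1,0,3,2,1,3,0,1] : List (Fin 4)) = [1,0,3,1,0] ++ ([3,2] ++ [1,3,0,1]) from rfl,
          cs.wordProd_append, cs.wordProd_append, cs.wordProd_append, cs.wordProd_append,
          wp_c_2_3 cs]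
    _ = cs.wordProd [1,0,3,1,3,0,2,1,3,0,1] := by
      rw [show ([1,0,3,1,0,3,2,1,3,0,1] : List (Fin 4)) = [1,0,3,1] ++ ([0,3] ++ [2,1,3,0,1]) from rfl,
          show ([1,0,3,1,3,0,2,1,3,0,1] : List (Fin 4)) = [1,0,3,1] ++ ([3,0] ++ [2,1,3,0,1]) from rfl,
          cs.wordProd_append, cs.wordProd_append, cs.wordProd_append, cs.wordProd_append,
          wp_c_0_3 cs]
    _ = cs.wordProd [1,0,3,1,3,0,2,1,0,3,1] := by
      rw [show ([1,0,3,1,3,0,2,1,3,0,1] : List (Fin 4)) = [1,0,3,1,3,0,2,1] ++ ([3,0] ++ [1]) from rfl,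
          show ([1,0,3,1,3,0,2,1,0,3,1] : List (Fin 4)) = [1,0,3,1,3,0,2,1] ++ ([0,3] ++ [1]) from rfl,
          cs.wordProd_append, cs.wordProd_append, cs.wordProd_append, cs.wordProd_append,
          wp_c_3_0 cs]
    _ = cs.wordProd [1,0,1,3,1,0,2,1,0,3,1] := by
      rw [show ([1,0,3,1,3,0,2,1,0,3,1] : List (Fin 4)) = [1,0] ++ ([3,1,3] ++ [0,2,1,0,3,1]) from rfl,
          show ([1,0,1,3,1,0,2,1,0,3,1] : List (Fin 4)) = [1,0] ++ ([1,3,1] ++ [0,2,1,0,3,1]) from rfl,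
          cs.wordProd_append, cs.wordProd_append, cs.wordProd_append, cs.wordProd_append,
          wp_b_3_1 cs]
    _ = cs.wordProd [0,1,0,3,1,0,2,1,0,3,1] := by
      rw [show ([1,0,1,3,1,0,2,1,0,3,1] : List (Fin 4)) = [] ++ ([1,0,1] ++ [3,1,0,2,1,0,3,1]) from rfl,
          show ([0,1,0,3,1,0,2,1,0,3,1] : List (Fin 4)) = [] ++ ([0,1,0] ++ [3,1,0,2,1,0,3,1]) from rfl,
          cs.wordProd_append, cs.wordProd_append, cs.wordProd_append, cs.wordProd_append,
          wp_b_1_0 cs]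
    _ = cs.wordProd [0,1,3,0,1,0,2,1,0,3,1] := by
      rw [show ([0,1,0,3,1,0,2,1,0,3,1] : List (Fin 4)) = [0,1] ++ ([0,3] ++ [1,0,2,1,0,3,1]) from rfl,
          show ([0,1,3,0,1,0,2,1,0,3,1] : List (Fin 4)) = [0,1] ++ ([3,0] ++ [1,0,2,1,0,3,1]) from rfl,
          cs.wordProd_append, cs.wordProd_append, cs.wordProd_append, cs.wordProd_append,
          wp_c_0_3 cs]
    _ = cs.wordProd [0,1,3,1,0,1,2,1,0,3,1] := by
      rw [show ([0,1,3,0,1,0,2,1,0,3,1] : List (Fin 4)) = [0,1,3] ++ ([0,1,0] ++ [2,1,0,3,1]) from rfl,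
          show ([0,1,3,1,0,1,2,1,0,3,1] : List (Fin 4)) = [0,1,3] ++ ([1,0,1] ++ [2,1,0,3,1]) from rfl,
          cs.wordProd_append, cs.wordProd_append, cs.wordProd_append, cs.wordProd_append,
          wp_b_0_1 cs]
    _ = cs.wordProd [0,1,3,1,0,2,1,2,0,3,1] := by
      rw [show ([0,1,3,1,0,1,2,1,0,3,1] : List (Fin 4)) = [0,1,3,1,0] ++ ([1,2,1] ++ [0,3,1]) from rfl,
          show ([0,1,3,1,0,2,1,2,0,3,1] : List (Fin 4)) = [0,1,3,1,0] ++ ([2,1,2] ++ [0,3,1]) from rfl,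
          cs.wordProd_append, cs.wordProd_append, cs.wordProd_append, cs.wordProd_append,
          wp_b_1_2 cs]
    _ = cs.wordProd [0,1,3,1,2,0,1,2,0,3,1] := by
      rw [show ([0,1,3,1,0,2,1,2,0,3,1] : List (Fin 4)) = [0,1,3,1] ++ ([0,2] ++ [1,2,0,3,1]) from rfl,
          show ([0,1,3,1,2,0,1,2,0,3,1] : List (Fin 4)) = [0,1,3,1] ++ ([2,0] ++ [1,2,0,3,1]) from rfl,
          cs.wordProd_append, cs.wordProd_append, cs.wordProd_append, cs.wordProd_append,
          wp_c_0_2 cs]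

end
end D4Proof

open D4Proof in
/-- in W(D₄), the element `v = s₂s₄s₁s₃s₂s₁s₃s₂s₄s₂s₁` is an involution
of length 11 which is not the longest element of any standard parabolic subgroup. -/
theorem D4_distinguished_involution_not_parabolic_longest {W : Type*} [Group W]
    (cs : CoxeterSystem D4Matrix W) (v : W)
    (hv : v = cs.simple 1 * cs.simple 3 * cs.simple 0 * cs.simple 2 * cs.simple 1 *
      cs.simple 0 * cs.simple 2 * cs.simple 1 * cs.simple 3 * cs.simple 1 * cs.simple 0) :
    v * v = 1 ∧
    cs.length v = 11 ∧
    ∀ I : Set (Fin 4),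
      ¬ (v ∈ Subgroup.closure (cs.simple '' I) ∧
        ∀ u ∈ Subgroup.closure (cs.simple '' I), cs.length u ≤ cs.length v) := by
  have hv' : v = cs.wordProd [1,3,0,2,1,0,2,1,3,1,0] := by
    rw [hv]; simp [CoxeterSystem.wordProd, mul_assoc]
  have hvv : v * v = 1 := by
    nth_rewrite 2 [hv']
    rw [chain cs,
      show ([0,1,3,1,2,0,1,2,0,3,1] : List (Fin 4)) = List.reverse [1,3,0,2,1,0,2,1,3,1,0] from rfl,
      CoxeterSystem.wordProd_reverse, ← hv', mul_inv_cancel]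
  have hNv : NF (enc (ph cs v)) = 11 := by
    rw [hv', ph_wordProd]
    decide
  have hlen : cs.length v = 11 := by
    apply le_antisymm
    · have h := cs.length_wordProd_le [1,3,0,2,1,0,2,1,3,1,0]
      rw [← hv'] at h
      simpa using h
    · have h := Nle cs v
      omega
  refine ⟨hvv, hlen, ?_⟩
  rintro I ⟨hmem, hmax⟩
  by_cases hU : ∀ j : Fin 4, j ∈ I
  · have hIuniv : I = Set.univ := Set.eq_univ_of_forall hU
    set u := cs.wordProd [1,3,0,2,1,0,2,1,3,1,0,2] with hu
    have hNu : NF (enc (ph cs u)) = 12 := by rw [hu, ph_wordProd]; decide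
    have hu12 : 12 ≤ cs.length u := by have h := Nle cs u; omega
    have humem : u ∈ Subgroup.closure (cs.simple '' I) := by
      rw [hIuniv, Set.image_univ, cs.subgroup_closure_range_simple]
      exact Subgroup.mem_top u
    have h := hmax u humem
    omega
  · push_neg at hU
    obtain ⟨i, hi⟩ := hU
    have hsub : (cs.simple '' I)⁻¹ = cs.simple '' I := by
      ext x
      simp only [Set.mem_inv, Set.mem_image]
      constructor
      · rintro ⟨j, hj, hx⟩
        exact ⟨j, hj, by rw [← cs.inv_simple, hx, inv_inv]⟩
      · rintro ⟨j, hj, hx⟩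
        exact ⟨j, hj, by rw [← hx, cs.inv_simple]⟩
    have hmono : v ∈ Submonoid.closure (cs.simple '' I) := by
      have h : v ∈ (Subgroup.closure (cs.simple '' I)).toSubmonoid := hmem
      rwa [Subgroup.closure_toSubmonoid, hsub, Set.union_self] at h
    have hph : ph cs v ∈ Submonoid.closure (ph cs '' (cs.simple '' I)) := by
      rw [← MonoidHom.map_mclosure]
      exact ⟨v, hmono, rfl⟩
    have himg : ph cs '' (cs.simple '' I) ⊆ tf '' {j | j ≠ i} := by
      rintro x ⟨y, ⟨j, hjI, rfl⟩, rfl⟩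
      exact ⟨j, fun h => hi (h ▸ hjI), (ph_simple cs j).symm⟩
    have hcl : ph cs v ∈ Submonoid.closure (tf '' {j | j ≠ i}) :=
      Submonoid.closure_mono himg hph
    have hvG : ph cs v = (([1,3,0,2,1,0,2,1,3,1,0] : List (Fin 4)).map tf).prod := by rw [hv', ph_wordProd]
    fin_cases i
    · have hle : Submonoid.closure (tf '' {j | j ≠ (0 : Fin 4)}) ≤ H0M := by
        rw [Submonoid.closure_le]
        rintro x ⟨j, hj, rfl⟩
        simp only [Set.mem_setOf_eq] at hj
        fin_cases j
        · exact absurd rfl hj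
        · exact (by decide : enc (tf 1) ∈ H0N)
        · exact (by decide : enc (tf 2) ∈ H0N)
        · exact (by decide : enc (tf 3) ∈ H0N)
      have hmem2 : enc (ph cs v) ∈ H0N := hle hcl
      rw [hvG] at hmem2
      exact absurd hmem2 (by decide)
    · have hle : Submonoid.closure (tf '' {j | j ≠ (1 : Fin 4)}) ≤ H1M := by
        rw [Submonoid.closure_le]
        rintro x ⟨j, hj, rfl⟩
        simp only [Set.mem_setOf_eq] at hj
        fin_cases j
        · exact (by decide : enc (tf 0) ∈ H1N)
        · exact absurd rfl hj
        · exact (by decide : enc (tf 2) ∈ H1N)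
        · exact (by decide : enc (tf 3) ∈ H1N)
      have hmem2 : enc (ph cs v) ∈ H1N := hle hcl
      rw [hvG] at hmem2
      exact absurd hmem2 (by decide)
    · have hle : Submonoid.closure (tf '' {j | j ≠ (2 : Fin 4)}) ≤ H2M := by
        rw [Submonoid.closure_le]
        rintro x ⟨j, hj, rfl⟩
        simp only [Set.mem_setOf_eq] at hj
        fin_cases j
        · exact (by decide : enc (tf 0) ∈ H2N)
        · exact (by decide : enc (tf 1) ∈ H2N)
        · exact absurd rfl hj
        · exact (by decide : enc (tf 3) ∈ H2N)
      have hmem2 : enc (ph cs v) ∈ H2N := hle hcl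
      rw [hvG] at hmem2
      exact absurd hmem2 (by decide)
    · have hle : Submonoid.closure (tf '' {j | j ≠ (3 : Fin 4)}) ≤ H3M := by
        rw [Submonoid.closure_le]
        rintro x ⟨j, hj, rfl⟩
        simp only [Set.mem_setOf_eq] at hj
        fin_cases j
        · exact (by decide : enc (tf 0) ∈ H3N)
        · exact (by decide : enc (tf 1) ∈ H3N)
        · exact (by decide : enc (tf 2) ∈ H3N)
        · exact absurd rfl hj
      have hmem2 : enc (ph cs v) ∈ H3N := hle hcl
      rw [hvG] at hmem2
      exact absurd hmem2 (by decide)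
end
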